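/- Under the assumptions Re γ ≠ 0 and Im γ ∉ 2πℤ, there exists a constant C' > 0 independent of k such that |Im √(β_k(γ))| ≥ C' √(1 + (2πk)²) for all integers k, where √ denotes the principal square root. -/

import Mathlib

open Complex Real

set_option maxHeartbeats 1000000


lemma delta_lem (s : ℝ) (hs : ∀ m : ℤ, s ≠ 2 * Real.pi * m) :
    ∃ δ : ℝ, 0 < δ ∧ ∀ k : ℤ, δ ≤ |s + 2 * Real.pi * k| := by
  have hπ : (0:ℝ) < Real.pi := Real.pi_pos
  set m0 : ℤ := round (s / (2 * Real.pi)) with hm0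
  have hδ' : 0 < |s - 2 * Real.pi * m0| := by
    rw [abs_pos, sub_ne_zero]; exact hs m0
  have hδπ : |s - 2 * Real.pi * m0| ≤ Real.pi := by
    have h := abs_sub_round (s / (2 * Real.pi))
    rw [← hm0] at h
    have h2 : |s / (2 * Real.pi) - m0| * (2 * Real.pi) ≤ (1/2) * (2 * Real.pi) :=
      mul_le_mul_of_nonneg_right h (by positivity)
    have h3 : |s / (2 * Real.pi) - m0| * (2 * Real.pi)
        = |s - 2 * Real.pi * m0| := by
      have heq : (s / (2 * Real.pi) - (m0:ℝ)) * (2 * Real.pi) = s - 2 * Real.pi * m0 := by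
        field_simp
      conv_rhs => rw [← heq]
      rw [abs_mul, abs_of_pos (show (0:ℝ) < 2 * Real.pi by positivity)]
    rw [h3] at h2
    linarith
  refine ⟨min |s - 2 * Real.pi * m0| Real.pi, lt_min hδ' hπ, fun k => ?_⟩
  by_cases hk : k = -m0
  · subst hk
    have : s + 2 * Real.pi * ((-m0 : ℤ) : ℝ) = s - 2 * Real.pi * m0 := by
      push_cast; ring
    rw [this]
    exact min_le_left _ _
  · have hne : (k + m0 : ℤ) ≠ 0 := by omega
    have h1 : (1:ℝ) ≤ |(k:ℝ) + (m0:ℝ)| := by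
      have := Int.one_le_abs hne
      calc (1:ℝ) ≤ ((|k + m0| : ℤ) : ℝ) := by exact_mod_cast this
        _ = |(k:ℝ) + (m0:ℝ)| := by push_cast [Int.cast_abs]; ring_nf
    have key : s + 2 * Real.pi * k = (s - 2 * Real.pi * m0) + 2 * Real.pi * ((k:ℝ) + m0) := by
      ring
    have h2 : 2 * Real.pi * 1 ≤ 2 * Real.pi * |(k:ℝ) + m0| :=
      mul_le_mul_of_nonneg_left h1 (by positivity)
    have h3 : |2 * Real.pi * ((k:ℝ) + m0)| = 2 * Real.pi * |(k:ℝ) + m0| := by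
      rw [abs_mul, abs_of_pos (show (0:ℝ) < 2 * Real.pi by positivity)]
    have h4 : |2 * Real.pi * ((k:ℝ) + m0)| - |s - 2 * Real.pi * m0| ≤ |s + 2 * Real.pi * k| := by
      rw [key]
      have h := abs_add_le (s - 2*Real.pi*m0 + 2*Real.pi*((k:ℝ)+m0)) (-(s - 2*Real.pi*m0))
      rw [abs_neg] at h
      have he : s - 2*Real.pi*m0 + 2*Real.pi*((k:ℝ)+m0) + -(s - 2*Real.pi*m0)
          = 2*Real.pi*((k:ℝ)+m0) := by ring
      rw [he] at h
      linarith
    have : Real.pi ≤ |s + 2 * Real.pi * k| := by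
      rw [h3] at h4; nlinarith
    exact le_trans (min_le_right _ _) this



lemma keyA (r a δ : ℝ) (hr : r ≠ 0) (hδ : 0 < δ) (ha : 0 ≤ a) :
    ∃ c : ℝ, 0 < c ∧ ∀ t : ℝ, δ ≤ |t| →
      c * (1 + t^2) ≤ Real.sqrt ((a - t^2)^2 + (2*r*t)^2) - (a - t^2) := by
  have hM : (0:ℝ) < a + r^2 + 2 := by positivity
  set M := a + r^2 + 2 with hMdef
  set c1 : ℝ := 2*r^2*δ^2/(M*(2*a+2)^2) with hc1def
  have hc1 : 0 < c1 := by
    apply div_pos (by positivity) (by positivity)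
  clear_value c1
  refine ⟨min 1 c1, lt_min one_pos hc1, fun t ht => ?_⟩
  have ht2 : δ^2 ≤ t^2 := by
    have := _root_.sq_abs t
    nlinarith [abs_nonneg t]
  set S := Real.sqrt ((a - t^2)^2 + (2*r*t)^2) with hSdef
  have hS0 : 0 ≤ S := Real.sqrt_nonneg _
  have hS2 : S^2 = (a - t^2)^2 + (2*r*t)^2 := Real.sq_sqrt (by positivity)
  have hSabs : |a - t^2| ≤ S := by
    rw [← Real.sqrt_sq_eq_abs]
    exact Real.sqrt_le_sqrt (by nlinarith [sq_nonneg (2*r*t)])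
  have hSup : S ≤ M * (1 + t^2) := by
    rw [hSdef]
    have e1 : (a - t^2)^2 + (2*r*t)^2 ≤ (a + r^2 + 2*t^2)^2 := by
      nlinarith [mul_nonneg ha (sq_nonneg t), mul_nonneg ha (sq_nonneg r),
        sq_nonneg (t^2), sq_nonneg (r^2)]
    have e2 : a + r^2 + 2*t^2 ≤ M*(1+t^2) := by
      rw [hMdef]
      nlinarith [sq_nonneg t, mul_nonneg ha (sq_nonneg t),
        mul_nonneg (sq_nonneg r) (sq_nonneg t)]
    have : (a - t^2)^2 + (2*r*t)^2 ≤ (M * (1 + t^2))^2 :=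
      le_trans e1 (pow_le_pow_left₀ (by positivity) e2 2)
    calc Real.sqrt ((a - t^2)^2 + (2*r*t)^2) ≤ Real.sqrt ((M * (1 + t^2))^2) :=
          Real.sqrt_le_sqrt this
      _ = M * (1 + t^2) := Real.sqrt_sq (by positivity)
  clear_value S
  clear hSdef
  by_cases hcase : 2*a + 1 ≤ t^2
  · -- large t
    have h1 : t^2 - a ≤ |a - t^2| := by
      rw [abs_sub_comm]; exact le_abs_self _
    have : 1 + t^2 ≤ S - (a - t^2) := by
      have := le_trans h1 hSabs
      linarith
    calc min 1 c1 * (1 + t^2) ≤ 1 * (1 + t^2) := by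
          apply mul_le_mul_of_nonneg_right (min_le_left _ _) (by positivity)
      _ ≤ S - (a - t^2) := by linarith
  · push_neg at hcase
    have hle : 1 + t^2 ≤ 2*a + 2 := by linarith
    set D := S - (a - t^2) with hDdef
    have hDS : S = D + (a - t^2) := by rw [hDdef]; ring
    have hD0 : 0 ≤ D := by
      have : a - t^2 ≤ |a - t^2| := le_abs_self _
      simp only [hDdef]; linarith [hSabs]
    have hprod : D * (S + (a - t^2)) = (2*r*t)^2 := by
      rw [hDdef]; nlinarith [hS2]
    have hsum : S + (a - t^2) ≤ 2 * M * (1 + t^2) := by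
      have : a - t^2 ≤ S := le_trans (le_abs_self _) hSabs
      linarith
    -- D * (2M(1+t²)) ≥ D * (S + (a - t²)) = 4r²t² ≥ 4r²δ²
    have h1 : 4*r^2*δ^2 ≤ D * (2 * M * (1 + t^2)) := by
      have hA : D * (S + (a - t^2)) ≤ D * (2 * M * (1 + t^2)) :=
        mul_le_mul_of_nonneg_left hsum hD0
      have hB : 4*r^2*δ^2 ≤ (2*r*t)^2 := by nlinarith [sq_nonneg r]
      linarith [hprod ▸ hA]
    have hc1eq : c1 * (M*(2*a+2)^2) = 2*r^2*δ^2 := by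
      rw [hc1def]; field_simp
    -- want: c1 * (1+t²) ≤ D
    have hgoal : c1 * (1 + t^2) ≤ D := by
      have hpos : (0:ℝ) < 2 * M * (1 + t^2) := by positivity
      apply le_of_mul_le_mul_right _ hpos
      calc c1 * (1 + t^2) * (2 * M * (1 + t^2))
          = 2 * c1 * (M * (1+t^2)^2) := by ring
        _ ≤ 2 * c1 * (M * (2*a+2)^2) := by
            apply mul_le_mul_of_nonneg_left _ (by nlinarith : (0:ℝ) ≤ 2 * c1)
            apply mul_le_mul_of_nonneg_left _ (le_of_lt hM)
            nlinarith
        _ = 2 * (2*r^2*δ^2) := by rw [← hc1eq]; ring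
        _ ≤ D * (2 * M * (1 + t^2)) := by linarith
    calc min 1 c1 * (1 + t^2) ≤ c1 * (1 + t^2) := by
          apply mul_le_mul_of_nonneg_right (min_le_right _ _) (by positivity)
      _ ≤ D := hgoal

theorem stmt2 (γ : ℂ) (κ : ℝ) (hre : γ.re ≠ 0)
    (him : ∀ m : ℤ, γ.im ≠ 2 * Real.pi * m) :
    ∃ C' : ℝ, 0 < C' ∧ ∀ k : ℤ,
      C' * Real.sqrt (1 + (2 * Real.pi * k) ^ 2)
        ≤ |((((γ + 2 * Real.pi * Complex.I * k) ^ 2 + (κ : ℂ) ^ 2)) ^ ((1 : ℂ) / 2)).im| := by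
  obtain ⟨δ, hδ, hδk⟩ := delta_lem γ.im him
  obtain ⟨c, hc, hkey⟩ := keyA γ.re (γ.re^2 + κ^2) δ hre hδ (by positivity)
  set s := γ.im with hs
  have hden : (0:ℝ) < 4 * (1 + s^2) := by positivity
  refine ⟨Real.sqrt (c / (4 * (1 + s^2))), Real.sqrt_pos.mpr (by positivity), fun k => ?_⟩
  set t : ℝ := s + 2 * Real.pi * k with ht
  set z : ℂ := (γ + 2 * Real.pi * Complex.I * k) ^ 2 + (κ:ℂ)^2 with hz
  have hzre : z.re = (γ.re^2 + κ^2) - t^2 := by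
    simp [hz, ht, Complex.add_re, Complex.add_im, Complex.mul_re, Complex.mul_im, pow_two]
    ring
  have hzim : z.im = 2 * γ.re * t := by
    simp [hz, ht, Complex.add_re, Complex.add_im, Complex.mul_re, Complex.mul_im, pow_two]
    ring
  set w : ℂ := z ^ ((1:ℂ)/2) with hw
  have hw2 : w ^ 2 = z := by
    rw [hw, one_div]
    exact_mod_cast Complex.cpow_ofNat_inv_pow z 2
  have hre2 : z.re = w.re^2 - w.im^2 := by
    rw [← hw2]; simp [pow_two, Complex.mul_re]
  have habs : ‖z‖ = w.re^2 + w.im^2 := by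
    rw [← hw2]
    rw [norm_pow, Complex.sq_norm, Complex.normSq_apply]
    ring
  have him2 : w.im^2 = (‖z‖ - z.re) / 2 := by linarith
  have habsz : ‖z‖ = Real.sqrt (((γ.re^2 + κ^2) - t^2)^2 + (2*γ.re*t)^2) := by
    rw [Complex.norm_def, Complex.normSq_apply, hzre, hzim]
    ring_nf
  -- key lower bound
  have hk1 : c * (1 + t^2) ≤ ‖z‖ - z.re := by
    rw [habsz, hzre]
    exact hkey t (hδk k)
  -- relate 1 + (2πk)² to 1 + t²
  have hk2 : 1 + (2 * Real.pi * k)^2 ≤ 2 * (1 + s^2) * (1 + t^2) := by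
    have : (2 * Real.pi * (k:ℝ)) = t - s := by rw [ht]; ring
    rw [this]
    nlinarith [sq_nonneg (t + s), sq_nonneg (s*t), sq_nonneg s, sq_nonneg t]
  clear_value w z t s
  have hmain : c / (4 * (1 + s^2)) * (1 + (2 * Real.pi * k)^2) ≤ w.im^2 := by
    rw [him2]
    have h1 : c / (4 * (1 + s^2)) * (1 + (2 * Real.pi * k)^2)
        ≤ c / (4 * (1 + s^2)) * (2 * (1 + s^2) * (1 + t^2)) :=
      mul_le_mul_of_nonneg_left hk2 (by positivity)
    have h2 : c / (4 * (1 + s^2)) * (2 * (1 + s^2) * (1 + t^2)) = c * (1 + t^2) / 2 := by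
      field_simp
      ring
    linarith [h1, h2, hk1]
  calc Real.sqrt (c / (4 * (1 + s^2))) * Real.sqrt (1 + (2 * Real.pi * k) ^ 2)
      = Real.sqrt (c / (4 * (1 + s^2)) * (1 + (2 * Real.pi * k) ^ 2)) :=
        (Real.sqrt_mul (by positivity) _).symm
    _ ≤ Real.sqrt (w.im^2) := Real.sqrt_le_sqrt hmain
    _ = |w.im| := Real.sqrt_sq_eq_abs _
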